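/- arXiv:2101.04181 — 4 statements merged into one kernel-verified Lean document; each statement's English description precedes it below -/
import Mathlib

section
/- Strang's lemma (abstract form). Let W be a real normed vector space, a : W → W → ℝ a bilinear form, and α, M > 0 constants such that α‖w‖² ≤ a(w,w) for all w ∈ W (coercivity) and |a(v,w)| ≤ M‖v‖‖w‖ for all v, w ∈ W (boundedness). Let V_h ⊆ W be a linear subspace, f : W → ℝ a linear functional, u ∈ W, and u_h ∈ V_h a discrete solution satisfying a(u_h, v) = f(v) for all v ∈ V_h. Suppose D ≥ 0 is a consistency bound, i.e. |f(v) − a(u,v)| ≤ D‖v‖ for all v ∈ V_h. Then for every w ∈ V_h one has ‖u − u_h‖ ≤ (1 + M/α)‖u − w‖ + D/α. -/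
/-- Strang's lemma (abstract form). -/
theorem strang_lemma
    {W : Type*} [NormedAddCommGroup W] [NormedSpace ℝ W]
    (a : W →ₗ[ℝ] W →ₗ[ℝ] ℝ) (α M : ℝ) (hα : 0 < α) (hM : 0 < M)
    (hcoer : ∀ w : W, α * ‖w‖ ^ 2 ≤ a w w)
    (hbound : ∀ v w : W, |a v w| ≤ M * ‖v‖ * ‖w‖)
    (Vh : Submodule ℝ W) (f : W →ₗ[ℝ] ℝ)
    (u : W) (uh : W) (huh : uh ∈ Vh)
    (hgal : ∀ v ∈ Vh, a uh v = f v)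
    (D : ℝ) (hD : 0 ≤ D)
    (hcons : ∀ v ∈ Vh, |f v - a u v| ≤ D * ‖v‖) :
    ∀ w ∈ Vh, ‖u - uh‖ ≤ (1 + M / α) * ‖u - w‖ + D / α := by
  intro w hw
  set e := uh - w with he
  have heVh : e ∈ Vh := Vh.sub_mem huh hw
  -- key estimate: α‖e‖² ≤ (M‖u-w‖ + D)‖e‖
  have key : α * ‖e‖ ^ 2 ≤ (M * ‖u - w‖ + D) * ‖e‖ := by
    have h1 : α * ‖e‖ ^ 2 ≤ a e e := hcoer e
    have h2 : (a e e : ℝ) = (f e - a u e) + a (u - w) e := by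
      have : (a e e : ℝ) = a uh e - a w e := by
        rw [he]; simp [map_sub, LinearMap.sub_apply]; ring
      rw [this, hgal e heVh]
      simp only [map_sub, LinearMap.sub_apply]
      ring
    have h3 : (f e - a u e) ≤ D * ‖e‖ := le_trans (le_abs_self _) (hcons e heVh)
    have h4 : (a (u - w) e : ℝ) ≤ M * ‖u - w‖ * ‖e‖ :=
      le_trans (le_abs_self _) (hbound _ _)
    calc α * ‖e‖ ^ 2 ≤ a e e := h1
      _ = (f e - a u e) + a (u - w) e := h2
      _ ≤ D * ‖e‖ + M * ‖u - w‖ * ‖e‖ := add_le_add h3 h4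
      _ = (M * ‖u - w‖ + D) * ‖e‖ := by ring
  have hle : α * ‖e‖ ≤ M * ‖u - w‖ + D := by
    rcases eq_or_lt_of_le (norm_nonneg e) with h0 | h0
    · rw [← h0]
      have : 0 ≤ M * ‖u - w‖ := mul_nonneg hM.le (norm_nonneg _)
      nlinarith
    · have := key
      rw [sq] at this
      nlinarith
  have hbnd : ‖e‖ ≤ (M * ‖u - w‖ + D) / α := by
    rw [le_div_iff₀ hα]; linarith [mul_comm α ‖e‖ ▸ hle]
  calc ‖u - uh‖ = ‖(u - w) + (-e)‖ := by rw [he]; congr 1; abel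
    _ ≤ ‖u - w‖ + ‖-e‖ := norm_add_le _ _
    _ = ‖u - w‖ + ‖e‖ := by rw [norm_neg]
    _ ≤ ‖u - w‖ + (M * ‖u - w‖ + D) / α := by linarith
    _ = (1 + M / α) * ‖u - w‖ + D / α := by field_simp; ring
end

section
/- Piecewise Lipschitz functions on a convex domain are Lipschitz. Let Ω ⊆ ℝ^d be a convex set, and suppose Ω = K₁ ∪ ⋯ ∪ Kₙ where each Kᵢ is a closed convex subset of ℝ^d. Let u : ℝ^d → ℝ^m be continuous on Ω and suppose there is L ≥ 0 such that u is Lipschitz with constant L on each Kᵢ ∩ Ω. Then u is Lipschitz with constant L on all of Ω. -/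
/-- Piecewise Lipschitz functions on a convex domain are Lipschitz: if a convex
set `Ω ⊆ ℝ^d` is a finite union of closed convex sets, and `u` is continuous on
`Ω` and `L`-Lipschitz on each piece, then `u` is `L`-Lipschitz on `Ω`. -/
theorem piecewise_lipschitz_on_convex
    (d m : ℕ) (Ω : Set (EuclideanSpace ℝ (Fin d))) (hΩ : Convex ℝ Ω)
    (n : ℕ) (K : Fin n → Set (EuclideanSpace ℝ (Fin d)))
    (hKclosed : ∀ i, IsClosed (K i)) (hKconvex : ∀ i, Convex ℝ (K i))
    (hunion : Ω = ⋃ i, K i)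
    (u : EuclideanSpace ℝ (Fin d) → EuclideanSpace ℝ (Fin m))
    (hu : ContinuousOn u Ω)
    (L : ℝ) (hL : 0 ≤ L)
    (hlip : ∀ i, ∀ x ∈ K i ∩ Ω, ∀ y ∈ K i ∩ Ω, ‖u x - u y‖ ≤ L * ‖x - y‖) :
    ∀ x ∈ Ω, ∀ y ∈ Ω, ‖u x - u y‖ ≤ L * ‖x - y‖ := by
  intro x hx y hy
  set γ : ℝ → EuclideanSpace ℝ (Fin d) := fun t => x + t • (y - x) with hγ
  have hγcont : Continuous γ := by
    apply continuous_const.add (continuous_id.smul continuous_const)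
  have hγmem : ∀ t ∈ Set.Icc (0:ℝ) 1, γ t ∈ Ω := fun t ht =>
    hΩ.add_smul_sub_mem hx hy ht
  have hγ0 : γ 0 = x := by simp [hγ]
  have hγ1 : γ 1 = y := by simp [hγ]
  have hγdist : ∀ s t : ℝ, t ≤ s → ‖γ s - γ t‖ = (s - t) * ‖y - x‖ := by
    intro s t hts
    have : γ s - γ t = (s - t) • (y - x) := by
      simp only [hγ]
      rw [sub_smul]
      abel
    rw [this, norm_smul, Real.norm_eq_abs, abs_of_nonneg (by linarith)]
  set A : Set ℝ := {t ∈ Set.Icc (0:ℝ) 1 | ‖u (γ t) - u x‖ ≤ L * ‖y - x‖ * t} with hA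
  have hAcl : IsClosed A := by
    have hcont : ContinuousOn (fun t => ‖u (γ t) - u x‖ - L * ‖y - x‖ * t)
        (Set.Icc (0:ℝ) 1) := by
      apply ContinuousOn.sub
      · exact ((hu.comp hγcont.continuousOn hγmem).sub continuousOn_const).norm
      · exact (continuous_const.mul continuous_id).continuousOn
    have : A = Set.Icc (0:ℝ) 1 ∩
        (fun t => ‖u (γ t) - u x‖ - L * ‖y - x‖ * t) ⁻¹' Set.Iic 0 := by
      ext t
      simp [hA, Set.mem_Icc, and_comm, sub_nonpos]
    rw [this]
    exact hcont.preimage_isClosed_of_isClosed isClosed_Icc isClosed_Iic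
  have h0A : (0:ℝ) ∈ A := by
    constructor
    · exact ⟨le_refl 0, zero_le_one⟩
    · simp [hγ0]
  have hAbdd : BddAbove A := ⟨1, fun t ht => ht.1.2⟩
  set T := sSup A with hT
  have hTA : T ∈ A := hAcl.csSup_mem ⟨0, h0A⟩ hAbdd
  have hT1 : T = 1 := by
    by_contra hne
    have hTlt : T < 1 := lt_of_le_of_ne hTA.1.2 hne
    -- The union of pieces not containing γ T is closed and misses T
    have hfin : (Set.univ : Set (Fin n)).Finite := Set.finite_univ
    set B : Set ℝ := ⋃ i ∈ {i : Fin n | γ T ∉ K i}, γ ⁻¹' (K i) with hB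
    have hBcl : IsClosed B :=
      (hfin.subset (Set.subset_univ _)).isClosed_biUnion
        (fun i _ => (hKclosed i).preimage hγcont)
    have hTB : T ∉ B := by
      simp only [hB, Set.mem_iUnion, Set.mem_preimage, Set.mem_setOf_eq]
      rintro ⟨i, hi, hTi⟩
      exact hi hTi
    obtain ⟨ε, hε, hball⟩ := Metric.isOpen_iff.1 hBcl.isOpen_compl T hTB
    set s := min (T + ε/2) 1 with hs
    have hTs : T < s := lt_min (by linarith) hTlt
    have hs1 : s ≤ 1 := min_le_right _ _
    have hsIcc : s ∈ Set.Icc (0:ℝ) 1 := ⟨le_trans hTA.1.1 hTs.le, hs1⟩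
    have hsB : s ∉ B := by
      apply hball
      rw [Metric.mem_ball, Real.dist_eq, abs_of_nonneg (by linarith [hTs.le])]
      have : s ≤ T + ε/2 := min_le_left _ _
      linarith
    have hsΩ : γ s ∈ Ω := hγmem s hsIcc
    obtain ⟨i, hsi⟩ : ∃ i, γ s ∈ K i := by
      have := hsΩ; rw [hunion] at this; exact Set.mem_iUnion.1 this
    have hTi : γ T ∈ K i := by
      by_contra hTi
      exact hsB (Set.mem_biUnion (by exact hTi) hsi)
    have hTΩ : γ T ∈ Ω := hγmem T hTA.1
    have hstep : ‖u (γ s) - u (γ T)‖ ≤ L * ‖γ s - γ T‖ :=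
      hlip i (γ s) ⟨hsi, hsΩ⟩ (γ T) ⟨hTi, hTΩ⟩
    rw [hγdist s T hTs.le] at hstep
    have hsA : s ∈ A := by
      refine ⟨hsIcc, ?_⟩
      calc ‖u (γ s) - u x‖ ≤ ‖u (γ s) - u (γ T)‖ + ‖u (γ T) - u x‖ :=
            norm_sub_le_norm_sub_add_norm_sub _ _ _
        _ ≤ L * ((s - T) * ‖y - x‖) + L * ‖y - x‖ * T := add_le_add hstep hTA.2
        _ = L * ‖y - x‖ * s := by ring
    have : s ≤ T := le_csSup hAbdd hsA
    linarith
  have := hTA.2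
  rw [hT1, hγ1, mul_one] at this
  calc ‖u x - u y‖ = ‖u y - u x‖ := norm_sub_rev _ _
    _ ≤ L * ‖y - x‖ := this
    _ = L * ‖x - y‖ := by rw [norm_sub_rev]
end

section
/- Trace inequality on an edge of a triangle. Let A, B, C ∈ ℝ² be affinely independent points and K = convexHull{A, B, C} the corresponding closed nondegenerate triangle. Then there exists a constant c_K > 0, depending only on K, such that for every function f : ℝ² → ℝ that is continuously differentiable on a neighbourhood of K, ∫₀¹ f(A + t(B − A))² dt ≤ c_K ( ∫_K f(x)² dx + ∫_K ‖∇f(x)‖² dx ), where dx denotes two-dimensional Lebesgue measure on K and ∇f the gradient of f. -/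
set_option maxHeartbeats 1000000

open MeasureTheory

noncomputable section TraceAux

lemma aux_li (A B C : EuclideanSpace ℝ (Fin 2))
    (hABC : AffineIndependent ℝ ![A, B, C]) :
    LinearIndependent ℝ ![B - A, C - A] := by
  have h := (affineIndependent_iff_linearIndependent_vsub ℝ ![A, B, C] 0).mp hABC
  rw [LinearIndependent.pair_iff]
  intro s t hst
  have h2 := linearIndependent_iff'.mp h Finset.univ
    (fun i => if (i : Fin 3) = 1 then s else t)
  have huniv : (Finset.univ : Finset {x : Fin 3 // x ≠ 0}) =
      {⟨1, by decide⟩, ⟨2, by decide⟩} := by decide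
  have key : ∑ i : {x : Fin 3 // x ≠ 0}, (if (i : Fin 3) = 1 then s else t) •
      (![A, B, C] (i : Fin 3) -ᵥ ![A, B, C] 0) = 0 := by
    rw [huniv, Finset.sum_pair (by decide)]
    simpa using hst
  have := h2 key
  constructor
  · simpa using this ⟨1, by decide⟩ (Finset.mem_univ _)
  · simpa using this ⟨2, by decide⟩ (Finset.mem_univ _)

lemma aux_D_ne (v w : EuclideanSpace ℝ (Fin 2))
    (h : LinearIndependent ℝ ![v, w]) : v 0 * w 1 - v 1 * w 0 ≠ 0 := by
  set b2 : Module.Basis (Fin 2) ℝ (EuclideanSpace ℝ (Fin 2)) :=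
    basisOfLinearIndependentOfCardEqFinrank h (by simp)
  set bf : Module.Basis (Fin 2) ℝ (EuclideanSpace ℝ (Fin 2)) := PiLp.basisFun 2 ℝ (Fin 2) with hbf
  set Leq := bf.equiv b2 (Equiv.refl _) with hLeq
  have hdet : LinearMap.det (Leq : EuclideanSpace ℝ (Fin 2) →ₗ[ℝ] EuclideanSpace ℝ (Fin 2)) ≠ 0 :=
    (LinearEquiv.isUnit_det' Leq).ne_zero
  have entry : ∀ i j, (LinearMap.toMatrix bf bf (Leq : _ →ₗ[ℝ] _)) i j = (![v, w] j) i := by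
    intro i j
    rw [LinearMap.toMatrix_apply, LinearEquiv.coe_coe, hLeq, Module.Basis.equiv_apply,
      Equiv.refl_apply]
    have : b2 j = ![v, w] j := by
      simp [b2, coe_basisOfLinearIndependentOfCardEqFinrank]
    rw [this, hbf, PiLp.basisFun_repr]
  have hmat : LinearMap.det (Leq : EuclideanSpace ℝ (Fin 2) →ₗ[ℝ] EuclideanSpace ℝ (Fin 2)) =
      v 0 * w 1 - v 1 * w 0 := by
    rw [← LinearMap.det_toMatrix bf, Matrix.det_fin_two, entry, entry, entry, entry]
    simp
    ring
  rw [hmat] at hdet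
  exact hdet

def psiMap (A v w : EuclideanSpace ℝ (Fin 2)) (p : EuclideanSpace ℝ (Fin 2)) :
    EuclideanSpace ℝ (Fin 2) := A + (p 0 * (1 - p 1)) • v + p 1 • w

def psiDeriv (v w : EuclideanSpace ℝ (Fin 2)) (p : EuclideanSpace ℝ (Fin 2)) :
    EuclideanSpace ℝ (Fin 2) →L[ℝ] EuclideanSpace ℝ (Fin 2) :=
  (((1 - p 1) • (EuclideanSpace.proj (0 : Fin 2) : EuclideanSpace ℝ (Fin 2) →L[ℝ] ℝ)
    - (p 0) • (EuclideanSpace.proj (1 : Fin 2) : EuclideanSpace ℝ (Fin 2) →L[ℝ] ℝ)).smulRight v)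
  + ((EuclideanSpace.proj (1 : Fin 2) : EuclideanSpace ℝ (Fin 2) →L[ℝ] ℝ).smulRight w)

lemma psiMap_hasFDerivAt (A v w p : EuclideanSpace ℝ (Fin 2)) :
    HasFDerivAt (psiMap A v w) (psiDeriv v w p) p := by
  have h0' := (EuclideanSpace.proj (0 : Fin 2) :
    EuclideanSpace ℝ (Fin 2) →L[ℝ] ℝ).hasFDerivAt (x := p)
  have h1' := (EuclideanSpace.proj (1 : Fin 2) :
    EuclideanSpace ℝ (Fin 2) →L[ℝ] ℝ).hasFDerivAt (x := p)
  have h0 : HasFDerivAt (fun q : EuclideanSpace ℝ (Fin 2) => q 0)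
      (EuclideanSpace.proj (0 : Fin 2) : EuclideanSpace ℝ (Fin 2) →L[ℝ] ℝ) p := h0'
  have h1 : HasFDerivAt (fun q : EuclideanSpace ℝ (Fin 2) => q 1)
      (EuclideanSpace.proj (1 : Fin 2) : EuclideanSpace ℝ (Fin 2) →L[ℝ] ℝ) p := h1'
  have hg : HasFDerivAt (fun q : EuclideanSpace ℝ (Fin 2) => q 0 * (1 - q 1))
      ((1 - p 1) • (EuclideanSpace.proj (0 : Fin 2) : EuclideanSpace ℝ (Fin 2) →L[ℝ] ℝ)
        - (p 0) • (EuclideanSpace.proj (1 : Fin 2) : EuclideanSpace ℝ (Fin 2) →L[ℝ] ℝ)) p := by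
    have := h0.mul (h1.const_sub 1)
    refine this.congr_fderiv ?_
    ext x
    simp
    ring
  exact ((hg.smul_const v).const_add A).add (h1.smul_const w)

lemma psiDeriv_det (v w p : EuclideanSpace ℝ (Fin 2)) :
    (psiDeriv v w p).det = (1 - p 1) * (v 0 * w 1 - v 1 * w 0) := by
  set bf : Module.Basis (Fin 2) ℝ (EuclideanSpace ℝ (Fin 2)) := PiLp.basisFun 2 ℝ (Fin 2) with hbf
  set M := LinearMap.toMatrix bf bf
      ((psiDeriv v w p) : EuclideanSpace ℝ (Fin 2) →ₗ[ℝ] EuclideanSpace ℝ (Fin 2)) with hM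
  have : (psiDeriv v w p).det
      = LinearMap.det ((psiDeriv v w p) : EuclideanSpace ℝ (Fin 2) →ₗ[ℝ] EuclideanSpace ℝ (Fin 2)) := rfl
  rw [this, ← LinearMap.det_toMatrix bf, ← hM, Matrix.det_fin_two]
  have e00 : M 0 0 = (1 - p 1) * v 0 := by
    rw [hM, LinearMap.toMatrix_apply]
    simp [psiDeriv, hbf, PiLp.basisFun_apply, PiLp.basisFun_repr, EuclideanSpace.single_apply]
  have e01 : M 0 1 = -(p 0) * v 0 + w 0 := by
    rw [hM, LinearMap.toMatrix_apply]
    simp [psiDeriv, hbf, PiLp.basisFun_apply, PiLp.basisFun_repr, EuclideanSpace.single_apply]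
  have e10 : M 1 0 = (1 - p 1) * v 1 := by
    rw [hM, LinearMap.toMatrix_apply]
    simp [psiDeriv, hbf, PiLp.basisFun_apply, PiLp.basisFun_repr, EuclideanSpace.single_apply]
  have e11 : M 1 1 = -(p 0) * v 1 + w 1 := by
    rw [hM, LinearMap.toMatrix_apply]
    simp [psiDeriv, hbf, PiLp.basisFun_apply, PiLp.basisFun_repr, EuclideanSpace.single_apply]
  rw [e00, e01, e10, e11]
  ring

lemma oneD (f : EuclideanSpace ℝ (Fin 2) → ℝ) (U : Set (EuclideanSpace ℝ (Fin 2)))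
    (hU : IsOpen U) (hf : ContDiffOn ℝ 1 f U)
    (x₀ u : EuclideanSpace ℝ (Fin 2)) (M : ℝ) (hM : ‖u‖ ≤ M)
    (hP : ∀ s ∈ Set.Icc (0:ℝ) (1/2), x₀ + s • u ∈ U) :
    (f x₀)^2 ≤ ∫ s in (0:ℝ)..(1/2),
      (3 * (f (x₀ + s • u))^2 + M^2 * ‖fderiv ℝ f (x₀ + s • u)‖^2) := by
  set P : ℝ → EuclideanSpace ℝ (Fin 2) := fun s => x₀ + s • u with hPdef
  set φ : ℝ → ℝ := fun s => f (P s) with hφdef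
  set φd : ℝ → ℝ := fun s => fderiv ℝ f (P s) u with hφddef
  have hPd : ∀ s : ℝ, HasDerivAt P u s := by
    intro s
    have := ((hasDerivAt_id s).smul_const u).const_add x₀
    rw [one_smul] at this
    exact this
  have hPcont : Continuous P := by continuity
  have hmaps : Set.MapsTo P (Set.Icc (0:ℝ) (1/2)) U := fun s hs => hP s hs
  have hder : ∀ s ∈ Set.Icc (0:ℝ) (1/2), HasDerivAt φ (φd s) s := by
    intro s hs
    have hdf : DifferentiableAt ℝ f (P s) :=
      (hf.contDiffAt (hU.mem_nhds (hP s hs))).differentiableAt one_ne_zero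
    exact hdf.hasFDerivAt.comp_hasDerivAt s (hPd s)
  have hφcont : ContinuousOn φ (Set.Icc (0:ℝ) (1/2)) :=
    (hf.continuousOn).comp hPcont.continuousOn hmaps
  have hφdcont : ContinuousOn φd (Set.Icc (0:ℝ) (1/2)) := by
    have h1 : ContinuousOn (fun s => fderiv ℝ f (P s)) (Set.Icc (0:ℝ) (1/2)) :=
      (hf.continuousOn_fderiv_of_isOpen hU le_rfl).comp hPcont.continuousOn hmaps
    exact h1.clm_apply continuousOn_const
  set g' : ℝ → ℝ := fun s => 2 * φ s * φd s with hg'def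
  have hg'cont : ContinuousOn g' (Set.Icc (0:ℝ) (1/2)) :=
    (continuousOn_const.mul hφcont).mul hφdcont
  set Bnd : ℝ → ℝ := fun s => φ s ^ 2 + M ^ 2 * ‖fderiv ℝ f (P s)‖ ^ 2 with hBnddef
  have hBndcont : ContinuousOn Bnd (Set.Icc (0:ℝ) (1/2)) := by
    apply (hφcont.pow 2).add
    apply continuousOn_const.mul
    exact (((hf.continuousOn_fderiv_of_isOpen hU le_rfl).comp
      hPcont.continuousOn hmaps).norm.pow 2)
  have hBndInt : IntervalIntegrable Bnd volume 0 (1/2) := by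
    apply ContinuousOn.intervalIntegrable
    rwa [Set.uIcc_of_le (by norm_num)]
  have hg'Int : IntervalIntegrable g' volume 0 (1/2) := by
    apply ContinuousOn.intervalIntegrable
    rwa [Set.uIcc_of_le (by norm_num)]
  -- FTC
  have hFTC : ∀ s ∈ Set.Icc (0:ℝ) (1/2), ∫ σ in (0:ℝ)..s, g' σ = φ s ^ 2 - φ 0 ^ 2 := by
    intro s hs
    have hsub : Set.uIcc (0:ℝ) s ⊆ Set.Icc (0:ℝ) (1/2) := by
      rw [Set.uIcc_of_le hs.1]
      exact Set.Icc_subset_Icc le_rfl hs.2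
    apply intervalIntegral.integral_eq_sub_of_hasDerivAt
    · intro σ hσ
      have := (hder σ (hsub hσ)).pow 2
      simp [hg'def, mul_comm, mul_assoc] at this ⊢
      exact this
    · apply hg'Int.mono_set
      rwa [Set.uIcc_of_le (by norm_num : (0:ℝ) ≤ 1/2)]
  set Kc : ℝ := ∫ s in (0:ℝ)..(1/2), Bnd s with hKc
  have step6 : ∀ s ∈ Set.Icc (0:ℝ) (1/2), φ 0 ^ 2 ≤ φ s ^ 2 + Kc := by
    intro s hs
    have h1 : φ 0 ^ 2 = φ s ^ 2 - ∫ σ in (0:ℝ)..s, g' σ := by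
      rw [hFTC s hs]; ring
    have h2 : |∫ σ in (0:ℝ)..s, g' σ| ≤ ∫ σ in (0:ℝ)..s, |g' σ| :=
      intervalIntegral.abs_integral_le_integral_abs hs.1
    have hsub : Set.uIcc (0:ℝ) s ⊆ Set.Icc (0:ℝ) (1/2) := by
      rw [Set.uIcc_of_le hs.1]
      exact Set.Icc_subset_Icc le_rfl hs.2
    have habsInt : IntervalIntegrable (fun σ => |g' σ|) volume 0 (1/2) := by
      apply ContinuousOn.intervalIntegrable
      rw [Set.uIcc_of_le (by norm_num)]
      exact hg'cont.abs
    have h3 : ∫ σ in (0:ℝ)..s, |g' σ| ≤ ∫ σ in (0:ℝ)..(1/2), |g' σ| := by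
      apply intervalIntegral.integral_mono_interval le_rfl hs.1 hs.2
      · filter_upwards with x using abs_nonneg _
      · exact habsInt
    have h4 : ∫ σ in (0:ℝ)..(1/2), |g' σ| ≤ Kc := by
      rw [hKc]
      apply intervalIntegral.integral_mono_on (by norm_num) habsInt hBndInt
      intro σ hσ
      have hb1 : |φd σ| ≤ ‖fderiv ℝ f (P σ)‖ * ‖u‖ := by
        have := (fderiv ℝ f (P σ)).le_opNorm u
        simpa [Real.norm_eq_abs] using this
      have hb2 : |φd σ| ≤ ‖fderiv ℝ f (P σ)‖ * M := by
        apply hb1.trans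
        exact mul_le_mul_of_nonneg_left hM (norm_nonneg _)
      have habs : |g' σ| ≤ φ σ ^ 2 + φd σ ^ 2 := by
        rw [hg'def]
        have : |2 * φ σ * φd σ| = 2 * |φ σ| * |φd σ| := by
          rw [abs_mul, abs_mul]; simp
        rw [this]
        nlinarith [sq_nonneg (|φ σ| - |φd σ|), sq_abs (φ σ), sq_abs (φd σ)]
      have hphid : φd σ ^ 2 ≤ M ^ 2 * ‖fderiv ℝ f (P σ)‖ ^ 2 := by
        have h0 : (0:ℝ) ≤ |φd σ| := abs_nonneg _
        nlinarith [sq_abs (φd σ), norm_nonneg (fderiv ℝ f (P σ)), hb2]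
      rw [hBnddef]
      dsimp only
      linarith
    have h5 : -(∫ σ in (0:ℝ)..s, g' σ) ≤ Kc := by
      have := neg_abs_le (∫ σ in (0:ℝ)..s, g' σ)
      linarith
    linarith [h1, h5]
  -- integrate step6 over s
  have hφsqInt : IntervalIntegrable (fun s => φ s ^ 2) volume 0 (1/2) := by
    apply ContinuousOn.intervalIntegrable
    rw [Set.uIcc_of_le (by norm_num)]
    exact hφcont.pow 2
  have step7 : (1/2) * φ 0 ^ 2 ≤ (∫ s in (0:ℝ)..(1/2), φ s ^ 2) + (1/2) * Kc := by
    have hmono : ∫ _s in (0:ℝ)..(1/2), (φ 0 ^ 2 : ℝ) ≤ ∫ s in (0:ℝ)..(1/2), (φ s ^ 2 + Kc) :=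
      intervalIntegral.integral_mono_on (by norm_num : (0:ℝ) ≤ 1/2)
        (intervalIntegrable_const (c := φ 0 ^ 2))
        (hφsqInt.add (intervalIntegrable_const (c := Kc))) step6
    rw [intervalIntegral.integral_add hφsqInt (intervalIntegrable_const (c := Kc)),
      intervalIntegral.integral_const, intervalIntegral.integral_const, smul_eq_mul,
      smul_eq_mul] at hmono
    linarith
  have hlin : ∫ s in (0:ℝ)..(1/2),
      (3 * (f (x₀ + s • u))^2 + M^2 * ‖fderiv ℝ f (x₀ + s • u)‖^2)
      = 2 * (∫ s in (0:ℝ)..(1/2), φ s ^ 2) + Kc := by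
    have h2 : IntervalIntegrable (fun s => 2 * φ s ^ 2) volume 0 (1/2) :=
      (intervalIntegrable_const (c := (2:ℝ))).mul_continuousOn ?_
    · have : (fun s => 3 * (f (x₀ + s • u))^2 + M^2 * ‖fderiv ℝ f (x₀ + s • u)‖^2)
          = fun s => 2 * φ s ^ 2 + Bnd s := by
        funext s
        rw [hBnddef, hφdef, hPdef]
        ring
      rw [this, intervalIntegral.integral_add h2 hBndInt,
        intervalIntegral.integral_const_mul]
    · rw [Set.uIcc_of_le (by norm_num)]
      exact hφcont.pow 2
  have hKgoal : φ 0 ^ 2 ≤ 2 * (∫ s in (0:ℝ)..(1/2), φ s ^ 2) + Kc := by linarith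
  have hφ0 : φ 0 = f x₀ := by
    rw [hφdef, hPdef]; simp
  rw [← hφ0, hlin]
  exact hKgoal

end TraceAux

/-- Trace inequality on an edge of a nondegenerate triangle in the plane. -/
theorem trace_inequality_triangle_edge
    (A B C : EuclideanSpace ℝ (Fin 2))
    (hABC : AffineIndependent ℝ ![A, B, C]) :
    ∃ cK : ℝ, 0 < cK ∧
      ∀ f : EuclideanSpace ℝ (Fin 2) → ℝ,
        (∃ U : Set (EuclideanSpace ℝ (Fin 2)), IsOpen U ∧
          convexHull ℝ {A, B, C} ⊆ U ∧ ContDiffOn ℝ 1 f U) →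
        ∫ t in (0:ℝ)..1, (f (A + t • (B - A))) ^ 2 ≤
          cK * ((∫ x in convexHull ℝ {A, B, C}, (f x) ^ 2) +
            ∫ x in convexHull ℝ {A, B, C}, ‖gradient f x‖ ^ 2) := by
  classical
  set v : EuclideanSpace ℝ (Fin 2) := B - A with hv
  set w : EuclideanSpace ℝ (Fin 2) := C - A with hw
  have hLI : LinearIndependent ℝ ![v, w] := aux_li A B C hABC
  set D : ℝ := v 0 * w 1 - v 1 * w 0 with hD
  have hDne : D ≠ 0 := aux_D_ne v w hLI
  have hDpos : 0 < |D| := abs_pos.mpr hDne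
  set M : ℝ := ‖v‖ + ‖w‖ with hM
  have hMnn : 0 ≤ M := by positivity
  set cK : ℝ := (2 / |D|) * (3 + M ^ 2) with hcK
  have hcKpos : 0 < cK := by positivity
  refine ⟨cK, hcKpos, ?_⟩
  rintro f ⟨U, hU, hKU, hf⟩
  set K : Set (EuclideanSpace ℝ (Fin 2)) := convexHull ℝ {A, B, C} with hK
  have hKcomp : IsCompact K := (Set.toFinite _).isCompact_convexHull ℝ
  have hKmeas : MeasurableSet K := hKcomp.isClosed.measurableSet
  -- membership of the deformed points in K
  have hmemQ : ∀ t ∈ Set.Icc (0:ℝ) 1, ∀ s ∈ Set.Icc (0:ℝ) (1/2),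
      A + t • v + s • (w - t • v) ∈ K := by
    intro t ht s hs
    have hA : A ∈ K := subset_convexHull ℝ _ (by simp)
    have hB : B ∈ K := subset_convexHull ℝ _ (by simp)
    have hC : C ∈ K := subset_convexHull ℝ _ (by simp)
    have hconv := convex_convexHull ℝ ({A, B, C} : Set (EuclideanSpace ℝ (Fin 2)))
    have hP1 : (1 - t) • A + t • B ∈ K :=
      hconv hA hB (by linarith [ht.2]) ht.1 (by ring)
    have hP2 : (1 - s) • ((1 - t) • A + t • B) + s • C ∈ K :=
      hconv hP1 hC (by linarith [hs.2]) hs.1 (by ring)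
    have heq : A + t • v + s • (w - t • v)
        = (1 - s) • ((1 - t) • A + t • B) + s • C := by
      rw [hv, hw]; module
    rwa [heq]
  -- the 1D trace bound for each t
  have h1D : ∀ t ∈ Set.Icc (0:ℝ) 1,
      (f (A + t • (B - A))) ^ 2 ≤ ∫ s in (0:ℝ)..(1/2),
        (3 * (f (A + t • v + s • (w - t • v)))^2
          + M^2 * ‖fderiv ℝ f (A + t • v + s • (w - t • v))‖^2) := by
    intro t ht
    have hnorm : ‖w - t • v‖ ≤ M := by
      calc ‖w - t • v‖ ≤ ‖w‖ + ‖t • v‖ := norm_sub_le _ _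
      _ = ‖w‖ + |t| * ‖v‖ := by rw [norm_smul, Real.norm_eq_abs]
      _ ≤ ‖w‖ + 1 * ‖v‖ := by
          have : |t| ≤ 1 := abs_le.mpr ⟨by linarith [ht.1], ht.2⟩
          nlinarith [norm_nonneg v]
      _ = M := by rw [hM]; ring
    have hmem : ∀ s ∈ Set.Icc (0:ℝ) (1/2), (A + t • v) + s • (w - t • v) ∈ U :=
      fun s hs => hKU (hmemQ t ht s hs)
    exact oneD f U hU hf (A + t • v) (w - t • v) M hnorm hmem
  -- continuity and integrability infrastructure
  set Φ : ℝ × ℝ → EuclideanSpace ℝ (Fin 2) :=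
    fun z => A + z.1 • v + z.2 • (w - z.1 • v) with hΦdef
  set g : EuclideanSpace ℝ (Fin 2) → ℝ :=
    fun x => 3 * (f x)^2 + M^2 * ‖fderiv ℝ f x‖^2 with hgdef
  set H2 : ℝ × ℝ → ℝ := fun z => g (Φ z) with hH2def
  set boxcl : Set (ℝ × ℝ) := Set.Icc (0:ℝ) 1 ×ˢ Set.Icc (0:ℝ) (1/2) with hboxcl
  set box : Set (ℝ × ℝ) := Set.Ioc (0:ℝ) 1 ×ˢ Set.Ioc (0:ℝ) (1/2) with hbox
  have hΦcont : Continuous Φ := by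
    apply Continuous.add
    · exact (continuous_const.add (continuous_fst.smul continuous_const))
    · exact continuous_snd.smul (continuous_const.sub (continuous_fst.smul continuous_const))
  have hΦmapsK : ∀ z ∈ boxcl, Φ z ∈ K := fun z hz => hmemQ z.1 hz.1 z.2 hz.2
  have hgcont : ContinuousOn g U := by
    have h1 := hf.continuousOn
    have h2 := hf.continuousOn_fderiv_of_isOpen hU le_rfl
    exact (continuousOn_const.mul (h1.pow 2)).add (continuousOn_const.mul (h2.norm.pow 2))
  have hH2cont : ContinuousOn H2 boxcl :=
    hgcont.comp hΦcont.continuousOn (fun z hz => hKU (hΦmapsK z hz))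
  have hH2int : IntegrableOn H2 boxcl :=
    hH2cont.integrableOn_compact (isCompact_Icc.prod isCompact_Icc)
  have hH2intIoc : IntegrableOn H2 box :=
    hH2int.mono_set (Set.prod_mono Set.Ioc_subset_Icc_self Set.Ioc_subset_Icc_self)
  set R : ℝ → ℝ := fun t => ∫ s in Set.Ioc (0:ℝ) (1/2), H2 (t, s) with hRdef
  have hH2prod : Integrable H2
      ((volume.restrict (Set.Ioc (0:ℝ) 1)).prod (volume.restrict (Set.Ioc (0:ℝ) (1/2)))) := by
    rw [Measure.prod_restrict]
    have : (volume : Measure (ℝ × ℝ)) = volume.prod volume := Measure.volume_eq_prod ℝ ℝ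
    rw [← this]
    exact hH2intIoc
  have hRint : IntegrableOn R (Set.Ioc (0:ℝ) 1) := hH2prod.integral_prod_left
  have hRintI : IntervalIntegrable R volume 0 1 := by
    rw [intervalIntegrable_iff, Set.uIoc_of_le (by norm_num : (0:ℝ) ≤ 1)]
    exact hRint
  have hLHScont : ContinuousOn (fun t : ℝ => (f (A + t • v))^2) (Set.Icc (0:ℝ) 1) := by
    have hpath : Continuous (fun t : ℝ => A + t • v) :=
      continuous_const.add (continuous_id.smul continuous_const)
    have hmapsU : ∀ t ∈ Set.Icc (0:ℝ) 1, A + t • v ∈ U := by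
      intro t ht
      have := hmemQ t ht 0 ⟨le_rfl, by norm_num⟩
      simpa using hKU this
    exact ((hf.continuousOn.comp hpath.continuousOn hmapsU).pow 2)
  have hLHSint : IntervalIntegrable (fun t : ℝ => (f (A + t • v))^2) volume 0 1 := by
    apply ContinuousOn.intervalIntegrable
    rwa [Set.uIcc_of_le (by norm_num : (0:ℝ) ≤ 1)]
  have hmono1 : (∫ t in (0:ℝ)..1, (f (A + t • (B - A))) ^ 2) ≤ ∫ t in (0:ℝ)..1, R t := by
    apply intervalIntegral.integral_mono_on (by norm_num : (0:ℝ) ≤ 1) hLHSint hRintI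
    intro t ht
    have h := h1D t ht
    have : (∫ s in (0:ℝ)..(1/2),
        (3 * (f (A + t • v + s • (w - t • v)))^2
          + M^2 * ‖fderiv ℝ f (A + t • v + s • (w - t • v))‖^2)) = R t := by
      rw [intervalIntegral.integral_of_le (by norm_num : (0:ℝ) ≤ 1/2)]
    rw [this] at h
    exact h
  -- Fubini
  have heq2 : (∫ t in (0:ℝ)..1, R t) = ∫ z in box, H2 z := by
    rw [intervalIntegral.integral_of_le (by norm_num : (0:ℝ) ≤ 1)]
    have : (∫ z in box, H2 z)
        = ∫ t in Set.Ioc (0:ℝ) 1, ∫ s in Set.Ioc (0:ℝ) (1/2), H2 (t, s) := by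
      rw [hbox]
      rw [show (volume : Measure (ℝ × ℝ)) = volume.prod volume from Measure.volume_eq_prod ℝ ℝ]
      apply setIntegral_prod
      have h := hH2prod
      rw [Measure.prod_restrict] at h
      exact h
    rw [this]
  -- transfer to EuclideanSpace via the measurable equiv
  set mE : EuclideanSpace ℝ (Fin 2) ≃ᵐ ℝ × ℝ :=
    (MeasurableEquiv.toLp 2 (Fin 2 → ℝ)).symm.trans MeasurableEquiv.finTwoArrow with hmEdef
  have hmE : MeasurePreserving mE volume volume :=
    (volume_preserving_finTwoArrow ℝ).comp
      (EuclideanSpace.volume_preserving_symm_measurableEquiv_toLp (Fin 2))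
  have hmEapp : ∀ p : EuclideanSpace ℝ (Fin 2), mE p = (p 0, p 1) := fun p => rfl
  set S : Set (EuclideanSpace ℝ (Fin 2)) := mE ⁻¹' box with hSdef
  have hSmeas : MeasurableSet S :=
    (measurableSet_Ioc.prod measurableSet_Ioc).preimage mE.measurable
  have hSmem : ∀ p : EuclideanSpace ℝ (Fin 2),
      p ∈ S ↔ (p 0 ∈ Set.Ioc (0:ℝ) 1 ∧ p 1 ∈ Set.Ioc (0:ℝ) (1/2)) := by
    intro p
    rw [hSdef, Set.mem_preimage, hmEapp, hbox, Set.mem_prod]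
  have heq3 : (∫ z in box, H2 z) = ∫ p in S, H2 (mE p) :=
    (hmE.setIntegral_preimage_emb mE.measurableEmbedding H2 box).symm
  have hΦψ : ∀ p : EuclideanSpace ℝ (Fin 2), Φ (p 0, p 1) = psiMap A v w p := by
    intro p
    show A + (p 0) • v + (p 1) • (w - (p 0) • v) = A + (p 0 * (1 - p 1)) • v + p 1 • w
    module
  have heq4 : (∫ p in S, H2 (mE p)) = ∫ p in S, g (psiMap A v w p) := by
    apply integral_congr_ae
    filter_upwards with p
    rw [hmEapp, hH2def]
    show g (Φ (p 0, p 1)) = g (psiMap A v w p)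
    rw [hΦψ]
  -- the closed parameter set
  set Scl : Set (EuclideanSpace ℝ (Fin 2)) :=
    {p | p 0 ∈ Set.Icc (0:ℝ) 1 ∧ p 1 ∈ Set.Icc (0:ℝ) (1/2)} with hScl
  have hSsubcl : S ⊆ Scl := by
    intro p hp
    rw [hSmem] at hp
    exact ⟨Set.Ioc_subset_Icc_self hp.1, Set.Ioc_subset_Icc_self hp.2⟩
  have hproj0 : Continuous (fun p : EuclideanSpace ℝ (Fin 2) => p 0) :=
    (EuclideanSpace.proj (0 : Fin 2)).continuous
  have hproj1 : Continuous (fun p : EuclideanSpace ℝ (Fin 2) => p 1) :=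
    (EuclideanSpace.proj (1 : Fin 2)).continuous
  have hSclcomp : IsCompact Scl := by
    apply Metric.isCompact_of_isClosed_isBounded
    · have : Scl = (fun p : EuclideanSpace ℝ (Fin 2) => p 0) ⁻¹' Set.Icc 0 1 ∩
          (fun p : EuclideanSpace ℝ (Fin 2) => p 1) ⁻¹' Set.Icc 0 (1/2) := rfl
      rw [this]
      exact (isClosed_Icc.preimage hproj0).inter (isClosed_Icc.preimage hproj1)
    · apply Bornology.IsBounded.subset (Metric.isBounded_closedBall (x := (0 : EuclideanSpace ℝ (Fin 2))) (r := 2))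
      intro p hp
      rw [Metric.mem_closedBall, dist_zero_right, EuclideanSpace.norm_eq]
      rw [Fin.sum_univ_two]
      have h0 : |p 0| ≤ 1 := by
        rw [abs_le]; exact ⟨by linarith [hp.1.1], hp.1.2⟩
      have h1 : |p 1| ≤ 1 := by
        rw [abs_le]; constructor <;> [linarith [hp.2.1]; linarith [hp.2.2]]
      have : ‖p 0‖^2 + ‖p 1‖^2 ≤ 4 := by
        rw [Real.norm_eq_abs, Real.norm_eq_abs]
        nlinarith [abs_nonneg (p 0), abs_nonneg (p 1)]
      calc √(‖p 0‖^2 + ‖p 1‖^2) ≤ √4 := Real.sqrt_le_sqrt this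
      _ = 2 := by rw [show (4:ℝ) = 2^2 by norm_num, Real.sqrt_sq (by norm_num)]
  have hψcont : Continuous (psiMap A v w) := by
    apply Continuous.add
    · exact continuous_const.add ((hproj0.mul (continuous_const.sub hproj1)).smul continuous_const)
    · exact hproj1.smul continuous_const
  have hψSclK : ∀ p ∈ Scl, psiMap A v w p ∈ K := by
    intro p hp
    rw [← hΦψ p]
    exact hmemQ _ hp.1 _ hp.2
  -- injectivity
  have hinj : Set.InjOn (psiMap A v w) S := by
    intro p hp q hq hpq
    rw [hSmem] at hp hq
    have h0 : (p 0 * (1 - p 1) - q 0 * (1 - q 1)) • v + (p 1 - q 1) • w = 0 := by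
      have hsub : psiMap A v w p - psiMap A v w q = 0 := by rw [hpq, sub_self]
      rw [show psiMap A v w p - psiMap A v w q
          = (p 0 * (1 - p 1) - q 0 * (1 - q 1)) • v + (p 1 - q 1) • w by
        simp only [psiMap]; module] at hsub
      exact hsub
    obtain ⟨h1, h2⟩ := LinearIndependent.pair_iff.mp hLI _ _ h0
    have hp1q1 : p 1 = q 1 := by linarith [sub_eq_zero.mp h2]
    have hp0q0 : p 0 = q 0 := by
      rw [hp1q1] at h1
      have hne : (1 : ℝ) - q 1 ≠ 0 := by
        have := hq.2.2
        intro hcontra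
        have : q 1 = 1 := by linarith
        linarith
      have := sub_eq_zero.mp (by linarith [h1] : p 0 * (1 - q 1) - q 0 * (1 - q 1) = 0)
      exact mul_right_cancel₀ hne this
    ext i
    fin_cases i
    · exact hp0q0
    · exact hp1q1
  -- change of variables
  have hderivW : ∀ p ∈ S, HasFDerivWithinAt (psiMap A v w) (psiDeriv v w p) S p :=
    fun p _ => (psiMap_hasFDerivAt A v w p).hasFDerivWithinAt
  have hcov : (∫ x in psiMap A v w '' S, g x)
      = ∫ p in S, |(psiDeriv v w p).det| • g (psiMap A v w p) :=
    integral_image_eq_integral_abs_det_fderiv_smul volume hSmeas hderivW hinj g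
  -- integrability on S
  have hgψcont : ContinuousOn (fun p => g (psiMap A v w p)) Scl :=
    hgcont.comp hψcont.continuousOn (fun p hp => hKU (hψSclK p hp))
  have hgψint : IntegrableOn (fun p => g (psiMap A v w p)) S :=
    (hgψcont.integrableOn_compact hSclcomp).mono_set hSsubcl
  have hdetcont : Continuous (fun p : EuclideanSpace ℝ (Fin 2) => |(psiDeriv v w p).det|) := by
    have : (fun p : EuclideanSpace ℝ (Fin 2) => |(psiDeriv v w p).det|)
        = fun p => |(1 - p 1) * D| := by
      funext p; rw [psiDeriv_det, hD]
    rw [this]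
    exact ((continuous_const.sub hproj1).mul continuous_const).abs
  have hdetgint : IntegrableOn
      (fun p => |(psiDeriv v w p).det| • g (psiMap A v w p)) S := by
    apply IntegrableOn.mono_set _ hSsubcl
    apply ContinuousOn.integrableOn_compact hSclcomp
    exact (hdetcont.continuousOn.smul hgψcont)
  -- pointwise estimate on S
  have hgnn : ∀ x, 0 ≤ g x := by
    intro x
    rw [hgdef]
    positivity
  have hb : (∫ p in S, g (psiMap A v w p))
      ≤ (2 / |D|) * ∫ p in S, |(psiDeriv v w p).det| • g (psiMap A v w p) := by
    rw [← integral_const_mul]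
    apply setIntegral_mono_on hgψint (hdetgint.const_mul _) hSmeas
    intro p hp
    rw [hSmem] at hp
    rw [psiDeriv_det, smul_eq_mul]
    have hp1 : 0 < p 1 := hp.2.1
    have hp2 : p 1 ≤ 1/2 := hp.2.2
    have habs : |(1 - p 1) * (v 0 * w 1 - v 1 * w 0)| = (1 - p 1) * |D| := by
      rw [abs_mul, abs_of_nonneg (by linarith : (0:ℝ) ≤ 1 - p 1), hD]
    rw [habs]
    have hG := hgnn (psiMap A v w p)
    have heqq : 2 / |D| * ((1 - p 1) * |D| * g (psiMap A v w p))
        = 2 * (1 - p 1) * g (psiMap A v w p) := by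
      field_simp
    rw [heqq]
    nlinarith
  -- compare with integral over K
  have himgsub : psiMap A v w '' S ⊆ K := by
    rintro x ⟨p, hp, rfl⟩
    exact hψSclK p (hSsubcl hp)
  have hgKint : IntegrableOn g K :=
    (hgcont.mono hKU).integrableOn_compact hKcomp
  have himg : (∫ x in psiMap A v w '' S, g x) ≤ ∫ x in K, g x := by
    apply setIntegral_mono_set hgKint
    · filter_upwards with x using hgnn x
    · exact HasSubset.Subset.eventuallyLE himgsub
  -- split the integral over K
  have hf2cont : ContinuousOn (fun x => (f x)^2) U := hf.continuousOn.pow 2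
  have hfdcont : ContinuousOn (fun x => ‖fderiv ℝ f x‖^2) U :=
    ((hf.continuousOn_fderiv_of_isOpen hU le_rfl).norm.pow 2)
  have hf2int : IntegrableOn (fun x => (f x)^2) K :=
    (hf2cont.mono hKU).integrableOn_compact hKcomp
  have hfdint : IntegrableOn (fun x => ‖fderiv ℝ f x‖^2) K :=
    (hfdcont.mono hKU).integrableOn_compact hKcomp
  have hsplit : (∫ x in K, g x)
      = 3 * (∫ x in K, (f x)^2) + M^2 * ∫ x in K, ‖fderiv ℝ f x‖^2 := by
    rw [hgdef]
    rw [integral_add (hf2int.const_mul 3) (hfdint.const_mul (M^2))]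
    rw [integral_const_mul, integral_const_mul]
  have hgrad : (∫ x in K, ‖fderiv ℝ f x‖^2) = ∫ x in K, ‖gradient f x‖^2 := by
    apply integral_congr_ae
    filter_upwards with x
    have : ‖gradient f x‖ = ‖fderiv ℝ f x‖ := by
      rw [gradient]; exact LinearIsometryEquiv.norm_map _ _
    rw [this]
  -- nonnegativity of the two target integrals
  have hI1nn : 0 ≤ ∫ x in K, (f x)^2 :=
    setIntegral_nonneg hKmeas (fun x _ => by positivity)
  have hI2nn : 0 ≤ ∫ x in K, ‖fderiv ℝ f x‖^2 :=
    setIntegral_nonneg hKmeas (fun x _ => by positivity)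
  -- final chain
  have hfinal : (∫ t in (0:ℝ)..1, (f (A + t • (B - A))) ^ 2)
      ≤ (2 / |D|) * (3 * (∫ x in K, (f x)^2) + M^2 * ∫ x in K, ‖fderiv ℝ f x‖^2) := by
    calc (∫ t in (0:ℝ)..1, (f (A + t • (B - A))) ^ 2)
        ≤ ∫ t in (0:ℝ)..1, R t := hmono1
      _ = ∫ z in box, H2 z := heq2
      _ = ∫ p in S, H2 (mE p) := heq3
      _ = ∫ p in S, g (psiMap A v w p) := heq4
      _ ≤ (2 / |D|) * ∫ p in S, |(psiDeriv v w p).det| • g (psiMap A v w p) := hb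
      _ = (2 / |D|) * ∫ x in psiMap A v w '' S, g x := by rw [hcov]
      _ ≤ (2 / |D|) * ∫ x in K, g x := by
          apply mul_le_mul_of_nonneg_left himg (by positivity)
      _ = _ := by rw [hsplit]
  rw [← hgrad]
  apply hfinal.trans
  rw [hcK]
  have h2D : 0 < 2 / |D| := by positivity
  nlinarith [hI1nn, hI2nn, sq_nonneg M, mul_le_mul_of_nonneg_left hI1nn (le_of_lt h2D)]
end

section
/- Poincaré–Wirtinger inequality on convex sets with diameter scaling. There exists a constant C > 0 such that for every compact convex set K ⊆ ℝ² with positive two-dimensional Lebesgue measure |K| and every function f : ℝ² → ℝ continuously differentiable on a neighbourhood of K, ∫_K ( f(x) − |K|⁻¹ ∫_K f(y) dy )² dx ≤ C (diam K)² ∫_K ‖∇f(x)‖² dx, where diam K is the diameter of K. -/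
open MeasureTheory Set
open scoped ENNReal

local notation "Ev" => EuclideanSpace ℝ (Fin 2)

lemma pw_cs {h : ℝ → ℝ} (h1 : IntervalIntegrable h volume 0 1)
    (h2 : IntervalIntegrable (fun t => (h t)^2) volume 0 1) :
    (∫ t in (0:ℝ)..1, h t)^2 ≤ ∫ t in (0:ℝ)..1, (h t)^2 := by
  set a : ℝ := ∫ t in (0:ℝ)..1, h t with ha
  have key : 0 ≤ ∫ t in (0:ℝ)..1, (h t - a)^2 :=
    intervalIntegral.integral_nonneg (by norm_num) (fun t _ => sq_nonneg _)
  have expand : ∀ t : ℝ, (h t - a)^2 = (h t)^2 - (2*a) * h t + a^2 := by intro t; ring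
  rw [intervalIntegral.integral_congr (fun t _ => expand t)] at key
  rw [intervalIntegral.integral_add ((h2.sub ((h1.const_mul (2*a))))) intervalIntegrable_const,
    intervalIntegral.integral_sub h2 (h1.const_mul (2*a)),
    intervalIntegral.integral_const_mul, intervalIntegral.integral_const] at key
  simp only [smul_eq_mul, sub_zero, one_mul] at key
  nlinarith [key]

lemma pw_scale (G : Ev → ℝ≥0∞) (hG : Measurable G)
    (a : Ev) {s : ℝ} (hs : 2⁻¹ ≤ s) :
    ∫⁻ x, G (a + s • (x - a)) ∂volume ≤ 4 * ∫⁻ p, G p ∂volume := by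
  have hs0 : s ≠ 0 := by positivity
  have hrw : ∀ x : Ev, a + s • (x - a) = s • x + (a - s • a) := by
    intro x; rw [smul_sub]; abel
  simp_rw [hrw]
  set b : Ev := a - s • a with hb
  have hH : Measurable (fun z : Ev => G (z + b)) := hG.comp (measurable_add_const b)
  have e1 : ∫⁻ x, G (s • x + b) ∂volume
      = ∫⁻ y, G (y + b) ∂(Measure.map (s • ·) (volume : Measure Ev)) :=
    (lintegral_map hH (measurable_const_smul s)).symm
  rw [e1, Measure.map_addHaar_smul volume hs0, lintegral_smul_measure,
    lintegral_add_right_eq_self (fun z => G z) b, smul_eq_mul]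
  gcongr
  have hfr : Module.finrank ℝ Ev = 2 := finrank_euclideanSpace_fin
  rw [hfr]
  calc ENNReal.ofReal |(s ^ 2)⁻¹| ≤ ENNReal.ofReal 4 := by
        apply ENNReal.ofReal_le_ofReal
        rw [abs_of_nonneg (by positivity)]
        rw [inv_le_comm₀ (by positivity) (by norm_num)]
        nlinarith
    _ = 4 := by norm_num

lemma pw_ftc {K U : Set Ev} (hK : IsCompact K) (hconv : Convex ℝ K) (hU : IsOpen U)
    (hKU : K ⊆ U) {f : Ev → ℝ} (hf : ContDiffOn ℝ 1 f U)
    {M : ℝ} (hM : ∀ p, K.indicator (fun q => ‖fderiv ℝ f q‖^2) p ≤ M)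
    {x y : Ev} (hx : x ∈ K) (hy : y ∈ K) :
    (f x - f y)^2 ≤ (Metric.diam K)^2 *
      ∫ t in (0:ℝ)..1, K.indicator (fun q => ‖fderiv ℝ f q‖^2) (y + t • (x - y)) := by
  set G : Ev → ℝ := K.indicator (fun q => ‖fderiv ℝ f q‖^2) with hGdef
  set c : ℝ → Ev := fun t => y + t • (x - y) with hc
  set φ : ℝ → ℝ := fun t => (fderiv ℝ f (c t)) (x - y) with hφ
  set d : ℝ := Metric.diam K with hd
  have hmemK : ∀ t ∈ Icc (0:ℝ) 1, c t ∈ K := fun t ht => hconv.add_smul_sub_mem hy hx ht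
  have hcc : Continuous c := by fun_prop
  have hdf : ContinuousOn (fderiv ℝ f) U := hf.continuousOn_fderiv_of_isOpen hU le_rfl
  have hφc : ContinuousOn φ (Icc 0 1) :=
    ((hdf.comp hcc.continuousOn (fun t ht => hKU (hmemK t ht))).clm_apply continuousOn_const)
  have huIcc : uIcc (0:ℝ) 1 = Icc 0 1 := uIcc_of_le zero_le_one
  have hφc' : ContinuousOn φ (uIcc 0 1) := by rw [huIcc]; exact hφc
  have hφint : IntervalIntegrable φ volume 0 1 := hφc'.intervalIntegrable
  have hφ2int : IntervalIntegrable (fun t => (φ t)^2) volume 0 1 :=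
    (hφc'.pow 2).intervalIntegrable
  have hderiv : ∀ t ∈ uIcc (0:ℝ) 1, HasDerivAt (f ∘ c) (φ t) t := by
    intro t ht
    rw [huIcc] at ht
    have hct : HasDerivAt c (x - y) t := by
      have h := ((hasDerivAt_id t).smul_const (x - y)).const_add y; rw [one_smul] at h; exact h
    have hmemU : c t ∈ U := hKU (hmemK t ht)
    have hfd : HasFDerivAt f (fderiv ℝ f (c t)) (c t) :=
      (((hf.differentiableOn one_ne_zero) (c t) hmemU).differentiableAt
        (hU.mem_nhds hmemU)).hasFDerivAt
    exact hfd.comp_hasDerivAt t hct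
  have hftc : ∫ t in (0:ℝ)..1, φ t = f x - f y := by
    have := intervalIntegral.integral_eq_sub_of_hasDerivAt hderiv hφint
    simpa [hc, Function.comp] using this
  have hGmeas : Measurable G :=
    ((measurable_fderiv ℝ f).norm.pow_const 2).indicator hK.isClosed.measurableSet
  have hGc_int : IntervalIntegrable (fun t => d^2 * G (c t)) volume 0 1 := by
    rw [intervalIntegrable_iff_integrableOn_Ioc_of_le zero_le_one]
    apply Measure.integrableOn_of_bounded (M := d^2 * M) (by simp)
      ((measurable_const.mul (hGmeas.comp hcc.measurable)).aestronglyMeasurable)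
    · filter_upwards with t
      have h0 : 0 ≤ G (c t) := by
        rw [hGdef]; apply Set.indicator_nonneg; intro q _; positivity
      rw [Real.norm_eq_abs, abs_of_nonneg (show 0 ≤ (((fun _ => d ^ 2) * G ∘ c : ℝ → ℝ)) t from mul_nonneg (sq_nonneg d) h0)]
      exact mul_le_mul_of_nonneg_left (hM (c t)) (sq_nonneg d)
  have hGnonneg : ∀ p, 0 ≤ G p := fun p =>
    Set.indicator_nonneg (fun q _ => by positivity) p
  have hpt : ∀ t ∈ Icc (0:ℝ) 1, (φ t)^2 ≤ d^2 * G (c t) := by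
    intro t ht
    have hmem : c t ∈ K := hmemK t ht
    have h1 : |φ t| ≤ ‖fderiv ℝ f (c t)‖ * ‖x - y‖ := by
      rw [hφ]
      calc |(fderiv ℝ f (c t)) (x - y)| = ‖(fderiv ℝ f (c t)) (x - y)‖ := rfl
        _ ≤ ‖fderiv ℝ f (c t)‖ * ‖x - y‖ := (fderiv ℝ f (c t)).le_opNorm _
    have h2 : ‖x - y‖ ≤ d := by
      rw [← dist_eq_norm]
      exact Metric.dist_le_diam_of_mem hK.isBounded hx hy
    have h3 : G (c t) = ‖fderiv ℝ f (c t)‖^2 := Set.indicator_of_mem hmem _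
    have h4 : (φ t)^2 = |φ t|^2 := (sq_abs _).symm
    rw [h4, h3]
    have h5 : (0:ℝ) ≤ ‖fderiv ℝ f (c t)‖ := norm_nonneg _
    have h6 : (0:ℝ) ≤ ‖x - y‖ := norm_nonneg _
    calc |φ t|^2 ≤ (‖fderiv ℝ f (c t)‖ * ‖x - y‖)^2 := by
          apply pow_le_pow_left₀ (abs_nonneg _) h1
      _ = ‖fderiv ℝ f (c t)‖^2 * ‖x - y‖^2 := by ring
      _ ≤ ‖fderiv ℝ f (c t)‖^2 * d^2 := by
          exact mul_le_mul_of_nonneg_left (pow_le_pow_left₀ h6 h2 2) (sq_nonneg _)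
      _ = d^2 * ‖fderiv ℝ f (c t)‖^2 := by ring
  calc (f x - f y)^2 = (∫ t in (0:ℝ)..1, φ t)^2 := by rw [hftc]
    _ ≤ ∫ t in (0:ℝ)..1, (φ t)^2 := pw_cs hφint hφ2int
    _ ≤ ∫ t in (0:ℝ)..1, d^2 * G (c t) := by
        apply intervalIntegral.integral_mono_on zero_le_one hφ2int hGc_int
        exact hpt
    _ = d^2 * ∫ t in (0:ℝ)..1, G (c t) := by
        rw [intervalIntegral.integral_const_mul]

lemma pw_lin {α : Type*} [MeasurableSpace α] {μ : Measure α} [IsFiniteMeasure μ] {f : α → ℝ}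
    (hfi : Integrable f μ) (hf2i : Integrable (fun y => (f y)^2) μ) (a b c : ℝ) :
    ∫ y, (a * (f y)^2 + b * f y + c) ∂μ
      = a * (∫ y, (f y)^2 ∂μ) + b * (∫ y, f y ∂μ) + (μ Set.univ).toReal * c := by
  have h2 : Integrable (fun y => a * (f y)^2) μ := hf2i.const_mul a
  have h3 : Integrable (fun y => b * f y) μ := hfi.const_mul b
  have h1 : Integrable (fun y => a * (f y)^2 + b * f y) μ := h2.add h3
  rw [integral_add h1 (integrable_const c), integral_add h2 h3,
    integral_const_mul, integral_const_mul, integral_const]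
  simp [smul_eq_mul, mul_comm, measureReal_def]

lemma pw_main {K U : Set Ev} {f : Ev → ℝ}
    (hK : IsCompact K) (hconv : Convex ℝ K) (hvol : 0 < volume K)
    (hU : IsOpen U) (hKU : K ⊆ U) (hf : ContDiffOn ℝ 1 f U) :
    ∫ x in K, (f x - (volume K).toReal⁻¹ * ∫ y in K, f y) ^ 2 ≤
      2 * (Metric.diam K) ^ 2 * ∫ x in K, ‖fderiv ℝ f x‖ ^ 2 := by
  classical
  set d : ℝ := Metric.diam K with hd
  have hd0 : 0 ≤ d := Metric.diam_nonneg
  set g : Ev → ℝ := fun q => ‖fderiv ℝ f q‖ ^ 2 with hgdef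
  set G : Ev → ℝ := K.indicator g with hGdef
  have hKm : MeasurableSet K := hK.isClosed.measurableSet
  have hfc : ContinuousOn f K := hf.continuousOn.mono hKU
  have hdf : ContinuousOn (fderiv ℝ f) U := hf.continuousOn_fderiv_of_isOpen hU le_rfl
  have hgc : ContinuousOn g K := ((hdf.mono hKU).norm.pow 2)
  obtain ⟨M0, hM0⟩ := hK.exists_bound_of_continuousOn hgc
  set M : ℝ := max M0 0 with hM
  have hMG : ∀ p, G p ≤ M := by
    intro p
    by_cases hp : p ∈ K
    · rw [hGdef, indicator_of_mem hp]
      exact le_trans (le_abs_self _) (le_trans (hM0 p hp) (le_max_left _ _))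
    · rw [hGdef, indicator_of_notMem hp]; exact le_max_right _ _
  have hGnn : ∀ p, 0 ≤ G p := fun p => indicator_nonneg (fun q _ => by positivity) p
  have hGm : Measurable G :=
    ((measurable_fderiv ℝ f).norm.pow_const 2).indicator hKm
  have hfi : IntegrableOn f K volume := hfc.integrableOn_compact hK
  have hf2i : IntegrableOn (fun y => (f y) ^ 2) K volume := (hfc.pow 2).integrableOn_compact hK
  have hgi : IntegrableOn g K volume := hgc.integrableOn_compact hK
  have hvK : volume K < ⊤ := hK.measure_lt_top
  set m : ℝ := (volume K).toReal with hm
  have hmpos : 0 < m := ENNReal.toReal_pos hvol.ne' hvK.ne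
  set If : ℝ := ∫ y in K, f y with hIf
  set If2 : ℝ := ∫ y in K, (f y) ^ 2 with hIf2
  set Ig : ℝ := ∫ y in K, g y with hIg
  have hIg0 : 0 ≤ Ig := setIntegral_nonneg hKm (fun y _ => by positivity)
  set P : Ev → ℝ := fun x => m * (f x) ^ 2 - 2 * If * f x + If2 with hPdef
  -- Step A1
  haveI hfinK : IsFiniteMeasure (volume.restrict K) :=
    ⟨by rw [Measure.restrict_apply_univ]; exact hvK⟩
  have hmK : ((volume.restrict K) Set.univ).toReal = m := by
    rw [Measure.restrict_apply_univ]
  have A1 : ∀ x : Ev, ∫ y in K, (f x - f y) ^ 2 = P x := by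
    intro x
    have h1 : ∀ y : Ev, (f x - f y) ^ 2
        = 1 * (f y)^2 + (-(2 * f x)) * f y + (f x)^2 := by
      intro y; ring
    simp_rw [h1]
    rw [pw_lin hfi hf2i 1 (-(2 * f x)) ((f x)^2), hmK]
    simp only [hPdef, ← hIf, ← hIf2]
    ring
  have hP0 : ∀ x, 0 ≤ P x := by
    intro x
    rw [← A1 x]
    exact setIntegral_nonneg hKm (fun y _ => sq_nonneg _)
  have hPc : ContinuousOn P K :=
    ((continuousOn_const.mul (hfc.pow 2)).sub (continuousOn_const.mul hfc)).add
      continuousOn_const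
  have hPi : IntegrableOn P K volume := hPc.integrableOn_compact hK
  -- Step A2
  have A2 : ∫ x in K, (f x - m⁻¹ * If) ^ 2 = (2*m)⁻¹ * ∫ x in K, P x := by
    set a : ℝ := m⁻¹ * If with ha
    have hL : ∫ x in K, (f x - a) ^ 2 = If2 - 2*a*If + m * a^2 := by
      have h1 : ∀ x : Ev, (f x - a) ^ 2
          = 1 * (f x)^2 + (-(2 * a)) * f x + a^2 := by
        intro x; ring
      simp_rw [h1]
      rw [pw_lin hfi hf2i 1 (-(2 * a)) (a^2), hmK]
      simp only [← hIf, ← hIf2]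
      ring
    have hR : ∫ x in K, P x = m * If2 - 2 * If * If + m * If2 := by
      have h1 : ∀ x : Ev, P x = m * (f x)^2 + (-(2 * If)) * f x + If2 := by
        intro x; rw [hPdef]; ring
      simp_rw [h1]
      rw [pw_lin hfi hf2i m (-(2 * If)) If2, hmK]
      simp only [← hIf, ← hIf2]
      ring
    rw [hL, hR, ha]
    field_simp
    ring
  -- lintegral machinery
  set Gh : Ev → ℝ≥0∞ := fun p => ENNReal.ofReal (G p) with hGh
  have hGhm : Measurable Gh := hGm.ennreal_ofReal
  have hIGh : ∫⁻ p, Gh p ∂volume = ENNReal.ofReal Ig := by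
    have h1 : Gh = K.indicator (fun p => ENNReal.ofReal (g p)) := by
      funext p
      by_cases hp : p ∈ K <;> simp [hGh, hGdef, hp]
    rw [h1, lintegral_indicator hKm]
    exact (ofReal_integral_eq_lintegral_ofReal hgi
      (Filter.Eventually.of_forall (fun y => by positivity))).symm
  set D2 : ℝ≥0∞ := ENNReal.ofReal (d^2) with hD2
  set I : Set ℝ := Icc 0 1 with hI
  -- Step B' : pointwise lintegral bound
  have hB : ∀ x ∈ K, ∀ y ∈ K,
      ENNReal.ofReal ((f x - f y)^2) ≤ D2 * ∫⁻ t in I, Gh (y + t • (x - y)) := by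
    intro x hx y hy
    have h1 := pw_ftc hK hconv hU hKU hf hMG hx hy
    rw [intervalIntegral.integral_of_le zero_le_one] at h1
    have hGc_int : IntegrableOn (fun t => G (y + t • (x - y))) (Ioc (0:ℝ) 1) volume := by
      apply Measure.integrableOn_of_bounded (M := M) (by simp)
        ((hGm.comp (by fun_prop : Measurable fun t : ℝ => y + t • (x - y))).aestronglyMeasurable)
      filter_upwards with t
      show ‖G (y + t • (x - y))‖ ≤ M
      rw [Real.norm_eq_abs, abs_of_nonneg (hGnn _)]
      exact hMG _
    calc ENNReal.ofReal ((f x - f y)^2)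
        ≤ ENNReal.ofReal (d^2 * ∫ t in Ioc (0:ℝ) 1, G (y + t • (x - y))) :=
          ENNReal.ofReal_le_ofReal h1
      _ = D2 * ENNReal.ofReal (∫ t in Ioc (0:ℝ) 1, G (y + t • (x - y))) := by
          rw [ENNReal.ofReal_mul (sq_nonneg d)]
      _ = D2 * ∫⁻ t in Ioc (0:ℝ) 1, Gh (y + t • (x - y)) := by
          rw [ofReal_integral_eq_lintegral_ofReal hGc_int
            (Filter.Eventually.of_forall (fun t => hGnn _))]
      _ = D2 * ∫⁻ t in I, Gh (y + t • (x - y)) := by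
          rw [Measure.restrict_congr_set Ioc_ae_eq_Icc]
  -- per-x bound
  have hPeq : ∀ x ∈ K, ENNReal.ofReal (P x)
      ≤ D2 * ∫⁻ y in K, ∫⁻ t in I, Gh (y + t • (x - y)) := by
    intro x hx
    have he : ENNReal.ofReal (P x) = ∫⁻ y in K, ENNReal.ofReal ((f x - f y)^2) := by
      rw [← A1 x]
      exact ofReal_integral_eq_lintegral_ofReal
        (((continuousOn_const.sub hfc).pow 2).integrableOn_compact hK)
        (Filter.Eventually.of_forall (fun y => sq_nonneg _))
    rw [he]
    calc ∫⁻ y in K, ENNReal.ofReal ((f x - f y)^2)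
        ≤ ∫⁻ y in K, D2 * ∫⁻ t in I, Gh (y + t • (x - y)) := by
          apply lintegral_mono_ae
          exact (ae_restrict_mem hKm).mono (fun y hy => hB x hx y hy)
      _ = D2 * ∫⁻ y in K, ∫⁻ t in I, Gh (y + t • (x - y)) :=
          lintegral_const_mul' _ _ ENNReal.ofReal_ne_top
  -- Tonelli and scaling
  set T : ℝ≥0∞ := ∫⁻ x in K, ∫⁻ y in K, ∫⁻ t in I, Gh (y + t • (x - y)) with hT
  have hTbound : T ≤ 4 * volume K * ENNReal.ofReal Ig := by
    set IGh : ℝ≥0∞ := ∫⁻ p, Gh p ∂volume with hIGhd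
    -- swap inner (y,t)
    have swap1 : ∀ x : Ev, ∫⁻ y in K, ∫⁻ t in I, Gh (y + t • (x - y))
        = ∫⁻ t in I, ∫⁻ y in K, Gh (y + t • (x - y)) := by
      intro x
      apply lintegral_lintegral_swap
      exact (hGhm.comp
        ((by fun_prop : Continuous fun p : Ev × ℝ => p.1 + p.2 • (x - p.1)).measurable)).aemeasurable
    have swap2 : ∫⁻ x in K, ∫⁻ t in I, ∫⁻ y in K, Gh (y + t • (x - y))
        = ∫⁻ t in I, ∫⁻ x in K, ∫⁻ y in K, Gh (y + t • (x - y)) := by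
      apply lintegral_lintegral_swap
      apply Measurable.aemeasurable
      apply Measurable.lintegral_prod_right'
        (f := fun (q : (Ev × ℝ) × Ev) => Gh (q.2 + q.1.2 • (q.1.1 - q.2)))
      exact hGhm.comp
        ((by fun_prop : Continuous fun q : (Ev × ℝ) × Ev =>
          q.2 + q.1.2 • (q.1.1 - q.2)).measurable)
    have hTeq : T = ∫⁻ t in I, ∫⁻ x in K, ∫⁻ y in K, Gh (y + t • (x - y)) := by
      rw [hT]
      simp_rw [swap1]
      exact swap2
    set Φ : ℝ → ℝ≥0∞ := fun t => ∫⁻ x in K, ∫⁻ y in K, Gh (y + t • (x - y)) with hΦ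
    have bound1 : ∀ t ∈ Icc (0:ℝ) 2⁻¹, Φ t ≤ (4 * IGh) * volume K := by
      intro t ht
      have hrw : ∀ x y₀ : Ev, y₀ + t • (x - y₀) = x + (1 - t) • (y₀ - x) := by
        intro x y₀
        rw [smul_sub, smul_sub, sub_smul, sub_smul, one_smul, one_smul]
        abel
      have hs : (2:ℝ)⁻¹ ≤ 1 - t := by have := ht.2; linarith
      calc Φ t = ∫⁻ x in K, ∫⁻ y₀ in K, Gh (x + (1 - t) • (y₀ - x)) := by
            rw [hΦ]; simp_rw [hrw]
        _ ≤ ∫⁻ x in K, 4 * IGh := by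
            apply lintegral_mono
            intro x
            calc ∫⁻ y₀ in K, Gh (x + (1 - t) • (y₀ - x))
                ≤ ∫⁻ y₀, Gh (x + (1 - t) • (y₀ - x)) ∂volume :=
                  lintegral_mono' Measure.restrict_le_self le_rfl
              _ ≤ 4 * IGh := pw_scale Gh hGhm x hs
        _ = (4 * IGh) * volume K := setLIntegral_const K _
    have bound2 : ∀ t ∈ Icc (2⁻¹:ℝ) 1, Φ t ≤ (4 * IGh) * volume K := by
      intro t ht
      have hs : (2:ℝ)⁻¹ ≤ t := ht.1
      have swap3 : Φ t = ∫⁻ y in K, ∫⁻ x in K, Gh (y + t • (x - y)) := by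
        rw [hΦ]
        apply lintegral_lintegral_swap
        exact (hGhm.comp
          ((by fun_prop : Continuous fun p : Ev × Ev =>
            p.2 + t • (p.1 - p.2)).measurable)).aemeasurable
      rw [swap3]
      calc ∫⁻ y in K, ∫⁻ x in K, Gh (y + t • (x - y))
          ≤ ∫⁻ y in K, 4 * IGh := by
            apply lintegral_mono
            intro y
            calc ∫⁻ x in K, Gh (y + t • (x - y))
                ≤ ∫⁻ x, Gh (y + t • (x - y)) ∂volume :=
                  lintegral_mono' Measure.restrict_le_self le_rfl
              _ ≤ 4 * IGh := pw_scale Gh hGhm y hs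
        _ = (4 * IGh) * volume K := setLIntegral_const K _
    have hsplit : ∫⁻ t in I, Φ t ≤ (∫⁻ t in Icc (0:ℝ) 2⁻¹, Φ t)
        + ∫⁻ t in Icc (2⁻¹:ℝ) 1, Φ t := by
      calc ∫⁻ t in I, Φ t ≤ ∫⁻ t in Icc (0:ℝ) 2⁻¹ ∪ Icc (2⁻¹:ℝ) 1, Φ t := by
            apply lintegral_mono_set
            intro t ht
            rcases le_total t 2⁻¹ with h | h
            · exact Or.inl ⟨ht.1, h⟩
            · exact Or.inr ⟨h, ht.2⟩
        _ ≤ _ := lintegral_union_le _ _ _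
    have hb1 : ∫⁻ t in Icc (0:ℝ) 2⁻¹, Φ t ≤ ENNReal.ofReal 2⁻¹ * ((4 * IGh) * volume K) := by
      calc ∫⁻ t in Icc (0:ℝ) 2⁻¹, Φ t ≤ ∫⁻ _ in Icc (0:ℝ) 2⁻¹, (4 * IGh) * volume K :=
            lintegral_mono_ae ((ae_restrict_mem measurableSet_Icc).mono bound1)
        _ = ((4 * IGh) * volume K) * volume (Icc (0:ℝ) 2⁻¹) := setLIntegral_const _ _
        _ = ENNReal.ofReal 2⁻¹ * ((4 * IGh) * volume K) := by
            rw [Real.volume_Icc]; norm_num; ring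
    have hb2 : ∫⁻ t in Icc (2⁻¹:ℝ) 1, Φ t ≤ ENNReal.ofReal 2⁻¹ * ((4 * IGh) * volume K) := by
      calc ∫⁻ t in Icc (2⁻¹:ℝ) 1, Φ t ≤ ∫⁻ _ in Icc (2⁻¹:ℝ) 1, (4 * IGh) * volume K :=
            lintegral_mono_ae ((ae_restrict_mem measurableSet_Icc).mono bound2)
        _ = ((4 * IGh) * volume K) * volume (Icc (2⁻¹:ℝ) 1) := setLIntegral_const _ _
        _ = ENNReal.ofReal 2⁻¹ * ((4 * IGh) * volume K) := by
            rw [Real.volume_Icc]; norm_num; ring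
    have hhalf : ENNReal.ofReal 2⁻¹ + ENNReal.ofReal 2⁻¹ = 1 := by
      rw [← ENNReal.ofReal_add (by norm_num) (by norm_num)]; norm_num
    calc T = ∫⁻ t in I, Φ t := hTeq
      _ ≤ (∫⁻ t in Icc (0:ℝ) 2⁻¹, Φ t) + ∫⁻ t in Icc (2⁻¹:ℝ) 1, Φ t := hsplit
      _ ≤ ENNReal.ofReal 2⁻¹ * ((4 * IGh) * volume K)
          + ENNReal.ofReal 2⁻¹ * ((4 * IGh) * volume K) := add_le_add hb1 hb2
      _ = (ENNReal.ofReal 2⁻¹ + ENNReal.ofReal 2⁻¹) * ((4 * IGh) * volume K) := by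
          rw [add_mul]
      _ = (4 * IGh) * volume K := by rw [hhalf, one_mul]
      _ = 4 * volume K * ENNReal.ofReal Ig := by rw [hIGh]; ring
  -- convert back to reals
  have hBig : ∫ x in K, P x ≤ d^2 * (4 * m * Ig) := by
    have h1 : ENNReal.ofReal (∫ x in K, P x) = ∫⁻ x in K, ENNReal.ofReal (P x) :=
      ofReal_integral_eq_lintegral_ofReal hPi
        (Filter.Eventually.of_forall (fun x => hP0 x))
    have h2 : ∫⁻ x in K, ENNReal.ofReal (P x) ≤ D2 * T := by
      calc ∫⁻ x in K, ENNReal.ofReal (P x)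
          ≤ ∫⁻ x in K, D2 * ∫⁻ y in K, ∫⁻ t in I, Gh (y + t • (x - y)) :=
            lintegral_mono_ae ((ae_restrict_mem hKm).mono (fun x hx => hPeq x hx))
        _ = D2 * T := lintegral_const_mul' _ _ ENNReal.ofReal_ne_top
    have h3 : ENNReal.ofReal (∫ x in K, P x)
        ≤ D2 * (4 * volume K * ENNReal.ofReal Ig) := by
      rw [h1]
      exact le_trans h2 (mul_le_mul_right hTbound _)
    have hfin : D2 * (4 * volume K * ENNReal.ofReal Ig) ≠ ⊤ := by
      apply ENNReal.mul_ne_top ENNReal.ofReal_ne_top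
      apply ENNReal.mul_ne_top
      · exact ENNReal.mul_ne_top (by norm_num) hvK.ne
      · exact ENNReal.ofReal_ne_top
    have h4 := ENNReal.toReal_mono hfin h3
    rw [ENNReal.toReal_ofReal (setIntegral_nonneg hKm (fun x _ => hP0 x))] at h4
    calc ∫ x in K, P x ≤ (D2 * (4 * volume K * ENNReal.ofReal Ig)).toReal := h4
      _ = d^2 * (4 * m * Ig) := by
          rw [hD2, ENNReal.toReal_mul, ENNReal.toReal_mul, ENNReal.toReal_mul,
            ENNReal.toReal_ofReal (sq_nonneg d), ENNReal.toReal_ofReal hIg0]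
          norm_num
          exact Or.inl (Or.inl hm.symm)
  -- finish
  calc ∫ x in K, (f x - (volume K).toReal⁻¹ * ∫ y in K, f y) ^ 2
      = (2*m)⁻¹ * ∫ x in K, P x := A2
    _ ≤ (2*m)⁻¹ * (d^2 * (4 * m * Ig)) := by
        apply mul_le_mul_of_nonneg_left hBig
        positivity
    _ = 2 * d^2 * Ig := by
        field_simp
        ring


/-- Poincaré–Wirtinger inequality on compact convex planar sets, with
quadratic scaling in the diameter and a constant independent of the set. -/
theorem poincare_wirtinger_convex :
    ∃ C : ℝ, 0 < C ∧
      ∀ K : Set (EuclideanSpace ℝ (Fin 2)),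
        IsCompact K → Convex ℝ K → 0 < volume K →
        ∀ f : EuclideanSpace ℝ (Fin 2) → ℝ,
          (∃ U : Set (EuclideanSpace ℝ (Fin 2)), IsOpen U ∧ K ⊆ U ∧
            ContDiffOn ℝ 1 f U) →
          ∫ x in K, (f x - (volume K).toReal⁻¹ * ∫ y in K, f y) ^ 2 ≤
            C * (Metric.diam K) ^ 2 * ∫ x in K, ‖gradient f x‖ ^ 2 := by
  refine ⟨2, by norm_num, ?_⟩
  rintro K hK hconv hvol f ⟨U, hU, hKU, hf⟩
  have h := pw_main hK hconv hvol hU hKU hf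
  have hg : ∀ x : Ev, ‖gradient f x‖ = ‖fderiv ℝ f x‖ := fun x =>
    LinearIsometryEquiv.norm_map (InnerProductSpace.toDual ℝ Ev).symm (fderiv ℝ f x)
  have he : ∫ x in K, ‖gradient f x‖ ^ 2 = ∫ x in K, ‖fderiv ℝ f x‖ ^ 2 := by
    simp_rw [hg]
  rw [he]
  exact h
end
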